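/- Let α be a real number with −1 < α < 0, and let 𝒯 ⊂ CP⁴ be the surface defined by the two equations y₁y₂ = y₀² and y₃y₄ = y₀(y₁ − αy₂ + (α−1)y₀) in homogeneous coordinates (y₀ : y₁ : y₂ : y₃ : y₄). Then the singular locus of 𝒯 consists exactly of the two points (0:0:0:1:0) and (0:0:0:0:1). -/
import Mathlib


/-- For −1 < α < 0 real, a point of the surface 𝒯 ⊂ CP⁴ defined by
F = y₁y₂ − y₀² = 0 and G = y₃y₄ − y₀(y₁ − αy₂ + (α−1)y₀) = 0 is singular
(in the sense of the Jacobian criterion: the gradients of F and G at a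
representative are linearly dependent) if and only if it is one of the two
points (0:0:0:1:0), (0:0:0:0:1). -/
theorem stmt_4 (α : ℝ) (h1 : -1 < α) (h2 : α < 0) :
    ∀ v : Fin 5 → ℂ, v ≠ 0 →
      v 1 * v 2 = (v 0) ^ 2 →
      v 3 * v 4 = v 0 * (v 1 - (α : ℂ) * v 2 + ((α : ℂ) - 1) * v 0) →
      ((¬ LinearIndependent ℂ
          ![![-2 * v 0, v 2, v 1, 0, 0],
            ![-(v 1) + (α : ℂ) * v 2 - 2 * ((α : ℂ) - 1) * v 0,
              -(v 0), (α : ℂ) * v 0, v 4, v 3]]) ↔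
        ((∃ c : ℂ, c ≠ 0 ∧ v = c • ![0, 0, 0, 1, 0]) ∨
          (∃ c : ℂ, c ≠ 0 ∧ v = c • ![0, 0, 0, 0, 1]))) := by
  intro v hv hF hG
  have hα : (α : ℂ) ≠ 0 := by
    simp only [ne_eq, Complex.ofReal_eq_zero]
    linarith
  rw [linearIndependent_fin2]
  simp only [Matrix.cons_val_one, Matrix.head_cons, Matrix.cons_val_zero]
  constructor
  · intro h
    rw [not_and_or] at h
    rcases h with hy | h
    · -- ∇G = 0 : leads to contradiction
      rw [not_not] at hy
      exfalso
      have e0 := congrFun hy 0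
      have e1 := congrFun hy 1
      have e2 := congrFun hy 2
      have e3 := congrFun hy 3
      have e4 := congrFun hy 4
      simp only [Matrix.cons_val_zero, Matrix.cons_val_one, Matrix.head_cons,
        Matrix.cons_val_two, Matrix.tail_cons, Matrix.cons_val_three,
        Matrix.cons_val_four, Pi.zero_apply, neg_eq_zero] at e0 e1 e2 e3 e4
      have hv0 : v 0 = 0 := e1
      have hv2 : v 2 = 0 := by
        have h12 : v 1 = (α : ℂ) * v 2 := by
          rw [hv0] at e0; linear_combination -e0
        have : (α : ℂ) * v 2 ^ 2 = 0 := by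
          rw [hv0] at hF; rw [h12] at hF; linear_combination hF
        have := mul_eq_zero.mp this
        rcases this with h | h
        · exact absurd h hα
        · exact pow_eq_zero_iff two_ne_zero |>.mp h
      have hv1 : v 1 = 0 := by rw [hv0, hv2] at e0; linear_combination -e0
      exact hv (funext fun i => by fin_cases i <;> simp [hv0, hv1, hv2, e3, e4])
    · push_neg at h
      obtain ⟨a, ha⟩ := h
      have e0 := congrFun ha 0
      have e1 := congrFun ha 1
      have e2 := congrFun ha 2
      have e3 := congrFun ha 3
      have e4 := congrFun ha 4
      simp only [Pi.smul_apply, smul_eq_mul, Matrix.cons_val_zero, Matrix.cons_val_one,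
        Matrix.head_cons, Matrix.cons_val_two, Matrix.tail_cons, Matrix.cons_val_three,
        Matrix.cons_val_four] at e0 e1 e2 e3 e4
      by_cases ha0 : a = 0
      · -- ∇F = 0
        subst ha0
        simp only [zero_mul] at e0 e1 e2 e3 e4
        have hv0 : v 0 = 0 := by linear_combination (1/2 : ℂ) * e0
        have hv2 : v 2 = 0 := e1.symm
        have hv1 : v 1 = 0 := e2.symm
        rw [hv0, zero_mul] at hG
        rcases mul_eq_zero.mp hG with h3 | h4
        · right
          have h4ne : v 4 ≠ 0 := by
            intro h4
            exact hv (funext fun i => by fin_cases i <;> simp [hv0, hv1, hv2, h3, h4])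
          exact ⟨v 4, h4ne, funext fun i => by
            fin_cases i <;> simp [hv0, hv1, hv2, h3]⟩
        · left
          have h3ne : v 3 ≠ 0 := by
            intro h3
            exact hv (funext fun i => by fin_cases i <;> simp [hv0, hv1, hv2, h3, h4])
          exact ⟨v 3, h3ne, funext fun i => by
            fin_cases i <;> simp [hv0, hv1, hv2, h4]⟩
      · -- a ≠ 0, leads to contradiction
        exfalso
        have hv4 : v 4 = 0 := by
          rcases mul_eq_zero.mp e3 with h | h
          · exact absurd h ha0
          · exact h
        have hv3 : v 3 = 0 := by
          rcases mul_eq_zero.mp e4 with h | h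
          · exact absurd h ha0
          · exact h
        by_cases hv0 : v 0 = 0
        · have hv2 : v 2 = 0 := by rw [hv0] at e1; linear_combination -e1
          have hv1 : v 1 = 0 := by rw [hv0] at e2; linear_combination -e2
          exact hv (funext fun i => by fin_cases i <;> simp [hv0, hv1, hv2, hv3, hv4])
        · -- substitute
          have hv1e : v 1 = a * (α : ℂ) * v 0 := by linear_combination -e2
          have hv2e : v 2 = -(a * v 0) := by linear_combination -e1
          have E1 : a ^ 2 * (α : ℂ) = -1 := by
            have key : (a ^ 2 * (α : ℂ) + 1) * v 0 ^ 2 = 0 := by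
              rw [hv1e, hv2e] at hF
              linear_combination -hF
            rcases mul_eq_zero.mp key with h | h
            · linear_combination h
            · exact absurd (pow_eq_zero_iff two_ne_zero |>.mp h) hv0
          have E2 : a * ((α : ℂ) - 1) = 2 := by
            have key : (a * ((α : ℂ) - 1) - 2) * v 0 = 0 := by
              rw [hv1e, hv2e] at e0
              linear_combination (-1/2 : ℂ) * e0 + (-(v 0)) * E1
            rcases mul_eq_zero.mp key with h | h
            · linear_combination h
            · exact absurd h hv0
          have key : ((α : ℂ) + 1) ^ 2 = 0 := by
            linear_combination (((α : ℂ) - 1) ^ 2) * E1 +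
              (-(α : ℂ) * (a * ((α : ℂ) - 1) + 2)) * E2
          have : (α : ℂ) + 1 = 0 := by
            exact pow_eq_zero_iff two_ne_zero |>.mp key
          have : α + 1 = 0 := by exact_mod_cast this
          linarith
  · rintro (⟨c, hc, rfl⟩ | ⟨c, hc, rfl⟩) <;>
    · intro ⟨hne, hall⟩
      apply hall 0
      rw [zero_smul]
      exact (funext fun i => by fin_cases i <;> simp).symm
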